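/- arXiv:1510.08781 — 2 statements merged into one kernel-verified Lean document; each statement's English description precedes it below -/
import Mathlib

section
/- In the metric space (F, sqrt(ρ)) no point is isolated; that is, F is a perfect Polish space in the topology induced by the metric sqrt(ρ). -/
open MeasureTheory Filter Set
open scoped ENNReal

noncomputable section

/-- `fEnum x` is the increasing enumeration `f_x : ω → ω` of the set `x ∈ [ω]^ω`. -/
def fEnum (x : Set ℕ) : ℕ → ℕ := Nat.nth (· ∈ x)

/-- The sequence `α^x ∈ [1/4,3/4]^ω` attached to `x ∈ [ω]^ω`:
`α^x_n = 1/4 + 1/(2·√(f_x⁻¹(n)+1))` if `n ∈ x` and `α^x_n = 1/4` otherwise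
(for `n ∈ x`, `f_x⁻¹(n)` is the number of elements of `x` below `n`). -/
noncomputable def alphaSeq (x : Set ℕ) (n : ℕ) : ℝ :=
  haveI := Classical.decPred (· ∈ x)
  if n ∈ x then 1/4 + 1/(2 * Real.sqrt ((Nat.count (· ∈ x) n : ℝ) + 1)) else 1/4

/-- `ρ(x,y) = Σ_n (α^x_n - α^y_n)² ∈ [0,∞]`. -/
noncomputable def rho (x y : Set ℕ) : ℝ≥0∞ :=
  ∑' n : ℕ, ENNReal.ofReal ((alphaSeq x n - alphaSeq y n)^2)

/-- `F = {g ∈ [ω]^ω : ρ(g,ω) < ∞}`. -/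
def Fset : Set (Set ℕ) := {g | g.Infinite ∧ rho g Set.univ < ⊤}

/-- The monoid operation `x · y = (f_y ∘ f_x)[ω]`. -/
def dotOp (x y : Set ℕ) : Set ℕ := Set.range (fEnum y ∘ fEnum x)

/-- `IsKakutaniProduct x μ` says that `μ` is the product measure
`μ^x = ∏_n (α^x_n δ_0 + (1 - α^x_n) δ_1)` on Cantor space `2^ω = ℕ → Bool`
(identifying `0` with `false` and `1` with `true`), i.e. `μ` is the Borel
probability measure giving each finite cylinder the corresponding product of
the coordinate weights.  These conditions determine `μ^x` uniquely. -/
def IsKakutaniProduct (x : Set ℕ) (μ : Measure (ℕ → Bool)) : Prop :=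
  IsProbabilityMeasure μ ∧
    ∀ (s : Finset ℕ) (f : ℕ → Bool),
      μ {g | ∀ n ∈ s, g n = f n} =
        ∏ n ∈ s, (if f n = false then ENNReal.ofReal (alphaSeq x n)
                  else ENNReal.ofReal (1 - alphaSeq x n))

/-- The subset of `ℕ` coded by a point of Cantor space. -/
def toSet (f : ℕ → Bool) : Set ℕ := {n | f n = true}

-- auxiliary
noncomputable def aseq (j : ℕ) : ℝ := 1/(2 * Real.sqrt ((j : ℝ)+1))

lemma aseq_pos (j : ℕ) : 0 < aseq j := by
  have : (0:ℝ) < Real.sqrt ((j:ℝ)+1) := Real.sqrt_pos.2 (by positivity)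
  unfold aseq; positivity

lemma aseq_anti : Antitone aseq := by
  intro i j hij
  have hij' : (i:ℝ) ≤ (j:ℝ) := Nat.cast_le.2 hij
  have h1 : (0:ℝ) < Real.sqrt ((i:ℝ)+1) := Real.sqrt_pos.2 (by positivity)
  unfold aseq
  apply one_div_le_one_div_of_le (by positivity)
  have : Real.sqrt ((i:ℝ)+1) ≤ Real.sqrt ((j:ℝ)+1) := Real.sqrt_le_sqrt (by linarith)
  linarith

lemma aseq_sq (j : ℕ) : aseq j ^ 2 = 1 / (4 * ((j:ℝ)+1)) := by
  unfold aseq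
  rw [div_pow, mul_pow, Real.sq_sqrt (by positivity)]
  norm_num

lemma aseq_tendsto : Tendsto aseq atTop (nhds 0) := by
  have he : aseq = fun j : ℕ => Real.sqrt (1 / (4 * ((j:ℝ)+1))) := by
    funext j
    rw [← aseq_sq j, Real.sqrt_sq (aseq_pos j).le]
  rw [he]
  have hinner : Tendsto (fun j : ℕ => 1 / (4 * ((j:ℝ)+1))) atTop (nhds 0) := by
    simp only [one_div]
    apply Tendsto.inv_tendsto_atTop
    apply Tendsto.const_mul_atTop (by norm_num : (0:ℝ) < 4)
    exact tendsto_atTop_add_const_right _ _ tendsto_natCast_atTop_atTop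
  have := (Real.continuous_sqrt.tendsto 0).comp hinner
  rw [Real.sqrt_zero] at this
  exact this

lemma alphaSeq_of_mem {x : Set ℕ} {n : ℕ} (hn : n ∈ x) :
    alphaSeq x n = 1/4 + aseq (@Nat.count (· ∈ x) (Classical.decPred _) n) := by
  simp [alphaSeq, hn, aseq]

lemma alphaSeq_of_not_mem {x : Set ℕ} {n : ℕ} (hn : n ∉ x) : alphaSeq x n = 1/4 := by
  simp [alphaSeq, hn]


open Finset in
lemma count_diff_le {g : Set ℕ} {m n : ℕ} (hn : n ≤ m) :
    @Nat.count (· ∈ g \ {m}) (Classical.decPred _) n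
      = @Nat.count (· ∈ g) (Classical.decPred _) n := by
  letI : DecidablePred (· ∈ g) := Classical.decPred _
  letI : DecidablePred (· ∈ g \ {m}) := Classical.decPred _
  rw [Nat.count_eq_card_filter_range, Nat.count_eq_card_filter_range]
  congr 1
  ext i
  simp only [Finset.mem_filter, Finset.mem_range, Set.mem_diff, Set.mem_singleton_iff]
  constructor
  · rintro ⟨h1, h2, _⟩; exact ⟨h1, h2⟩
  · rintro ⟨h1, h2⟩; exact ⟨h1, h2, by omega⟩

open Finset in
lemma count_diff_gt {g : Set ℕ} {m n : ℕ} (hm : m ∈ g) (hn : m < n) :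
    @Nat.count (· ∈ g \ {m}) (Classical.decPred _) n
      = @Nat.count (· ∈ g) (Classical.decPred _) n - 1 := by
  letI : DecidablePred (· ∈ g) := Classical.decPred _
  letI : DecidablePred (· ∈ g \ {m}) := Classical.decPred _
  rw [Nat.count_eq_card_filter_range, Nat.count_eq_card_filter_range]
  have hfe : Finset.filter (· ∈ g \ {m}) (Finset.range n)
      = (Finset.filter (· ∈ g) (Finset.range n)).erase m := by
    ext i
    simp only [Finset.mem_filter, Finset.mem_erase, Finset.mem_range, Set.mem_diff,
      Set.mem_singleton_iff]
    tauto
  rw [hfe, Finset.card_erase_of_mem]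
  simp [Finset.mem_filter, Finset.mem_range, hn, hm]

lemma count_ge_of_mem_lt {g : Set ℕ} {m n : ℕ} (hm : m ∈ g) (hn : m < n) :
    @Nat.count (· ∈ g) (Classical.decPred _) m + 1
      ≤ @Nat.count (· ∈ g) (Classical.decPred _) n := by
  letI : DecidablePred (· ∈ g) := Classical.decPred _
  have h1 : Nat.count (· ∈ g) (m+1) = Nat.count (· ∈ g) m + 1 := by
    rw [Nat.count_succ, if_pos hm]
  calc Nat.count (· ∈ g) m + 1 = Nat.count (· ∈ g) (m+1) := h1.symm
    _ ≤ Nat.count (· ∈ g) n := Nat.count_monotone _ hn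


lemma hasSum_tele (k : ℕ) :
    HasSum (fun n : ℕ => aseq (k + n) - aseq (k + n + 1)) (aseq k) := by
  have hnn : ∀ n : ℕ, 0 ≤ aseq (k + n) - aseq (k + n + 1) := by
    intro n; have := aseq_anti (Nat.le_succ (k + n)); simpa [sub_nonneg] using this
  rw [hasSum_iff_tendsto_nat_of_nonneg hnn]
  have hps : ∀ N : ℕ, ∑ i ∈ Finset.range N, (aseq (k + i) - aseq (k + i + 1))
      = aseq k - aseq (k + N) := by
    intro N
    have := Finset.sum_range_sub' (fun i => aseq (k + i)) N
    simpa [add_assoc] using this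
  simp only [hps]
  have h2 : Tendsto (fun N : ℕ => aseq (k + N)) atTop (nhds 0) :=
    aseq_tendsto.comp (by simpa [Nat.add_comm] using tendsto_add_atTop_nat k)
  simpa using tendsto_const_nhds.sub h2

noncomputable def vseq (k : ℕ) (j : ℕ) : ℝ :=
  if j < k then 0 else if j = k then aseq k else aseq (j - 1) - aseq j

lemma vseq_nonneg (k j : ℕ) : 0 ≤ vseq k j := by
  unfold vseq
  split
  · exact le_refl 0
  split
  · exact (aseq_pos k).le
  · have := aseq_anti (Nat.sub_le j 1)
    linarith

lemma hasSum_vseq (k : ℕ) : HasSum (vseq k) (2 * aseq k) := by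
  have h1 : HasSum (fun n : ℕ => vseq k (n + (k + 1))) (aseq k) := by
    have : (fun n : ℕ => vseq k (n + (k + 1))) = fun n => aseq (k + n) - aseq (k + n + 1) := by
      funext n
      have h2 : ¬ (n + (k+1) < k) := by omega
      have h3 : ¬ (n + (k+1) = k) := by omega
      have h4 : n + (k+1) - 1 = k + n := by omega
      have h5 : n + (k+1) = k + n + 1 := by omega
      rw [show n + (k+1) = k + n + 1 by omega]
      have h6 : ¬ (k + n + 1 < k) := by omega
      have h7 : ¬ (k + n + 1 = k) := by omega
      have h8 : k + n + 1 - 1 = k + n := by omega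
      simp only [vseq, h6, h7, if_false, h8]
    rw [this]; exact hasSum_tele k
  have := (hasSum_nat_add_iff (k+1)).1 h1
  have hsum : ∑ i ∈ Finset.range (k+1), vseq k i = aseq k := by
    rw [Finset.sum_range_succ]
    have hz : ∑ i ∈ Finset.range k, vseq k i = 0 := by
      apply Finset.sum_eq_zero
      intro i hi
      simp only [Finset.mem_range] at hi
      simp [vseq, hi]
    rw [hz, zero_add]
    simp [vseq]
  rw [hsum] at this
  convert this using 1
  case e'_6 => ring
  case e'_3 => rfl


lemma rho_diff_le {g : Set ℕ} (hg : (setOf (· ∈ g)).Infinite) (k : ℕ) :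
    rho g (g \ {Nat.nth (· ∈ g) k}) ≤ ENNReal.ofReal (1 / (2 * ((k:ℝ) + 1))) := by
  letI : DecidablePred (· ∈ g) := Classical.decPred _
  set m := Nat.nth (· ∈ g) k with hm
  have hinj : Function.Injective (Nat.nth (· ∈ g)) := Nat.nth_injective hg
  have hmem : ∀ j, Nat.nth (· ∈ g) j ∈ g := fun j => Nat.nth_mem_of_infinite hg j
  have hmg : m ∈ g := hmem k
  have hd0 : ∀ n, n ∉ Set.range (Nat.nth (· ∈ g)) →
      ENNReal.ofReal ((alphaSeq g n - alphaSeq (g \ {m}) n)^2) = 0 := by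
    intro n hn
    have hng : n ∉ g := fun hng => hn ⟨_, Nat.nth_count hng⟩
    have hnh : n ∉ g \ {m} := fun hnh => hng hnh.1
    rw [alphaSeq_of_not_mem hng, alphaSeq_of_not_mem hnh]
    simp
  have hre : rho g (g \ {m}) = ∑' j, ENNReal.ofReal
      ((alphaSeq g (Nat.nth (· ∈ g) j) - alphaSeq (g \ {m}) (Nat.nth (· ∈ g) j))^2) := by
    rw [rho]
    refine (Function.Injective.tsum_eq hinj ?_).symm
    intro n hn
    by_contra hc
    exact (Function.mem_support.1 hn) (hd0 n hc)
  have hterm : ∀ j, ENNReal.ofReal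
      ((alphaSeq g (Nat.nth (· ∈ g) j) - alphaSeq (g \ {m}) (Nat.nth (· ∈ g) j))^2)
      ≤ ENNReal.ofReal (aseq k * vseq k j) := by
    intro j
    rcases lt_trichotomy j k with hj | hj | hj
    · have hlt : Nat.nth (· ∈ g) j < m := (Nat.nth_lt_nth hg).2 hj
      have hjg : Nat.nth (· ∈ g) j ∈ g := hmem j
      have hjh : Nat.nth (· ∈ g) j ∈ g \ {m} :=
        ⟨hjg, by simpa using ne_of_lt hlt⟩
      rw [alphaSeq_of_mem hjg, alphaSeq_of_mem hjh,
        count_diff_le (le_of_lt hlt)]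
      simp [mul_nonneg (aseq_pos k).le (vseq_nonneg k j)]
    · subst hj
      have hmh : m ∉ g \ {m} := by simp
      rw [alphaSeq_of_mem hmg, alphaSeq_of_not_mem hmh,
        Nat.count_nth_of_infinite hg]
      have hv : vseq j j = aseq j := by simp [vseq]
      rw [hv]
      apply le_of_eq
      congr 1
      ring
    · have hlt : m < Nat.nth (· ∈ g) j := (Nat.nth_lt_nth hg).2 hj
      have hjg : Nat.nth (· ∈ g) j ∈ g := hmem j
      have hjh : Nat.nth (· ∈ g) j ∈ g \ {m} :=
        ⟨hjg, by simpa using (ne_of_gt hlt)⟩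
      rw [alphaSeq_of_mem hjg, alphaSeq_of_mem hjh,
        count_diff_gt hmg hlt, Nat.count_nth_of_infinite hg]
      apply ENNReal.ofReal_le_ofReal
      have hv : vseq k j = aseq (j - 1) - aseq j := by
        simp only [vseq]
        rw [if_neg (by omega), if_neg (by omega)]
      rw [hv]
      have h1 : aseq j ≤ aseq (j-1) := aseq_anti (Nat.sub_le j 1)
      have h2 : aseq (j-1) ≤ aseq k := aseq_anti (by omega)
      have h3 : 0 < aseq j := aseq_pos j
      nlinarith
  have hsum : ∑' j, ENNReal.ofReal (aseq k * vseq k j)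
      = ENNReal.ofReal (aseq k * (2 * aseq k)) := by
    rw [← ENNReal.ofReal_tsum_of_nonneg
      (fun j => mul_nonneg (aseq_pos k).le (vseq_nonneg k j))
      ((hasSum_vseq k).summable.mul_left _)]
    congr 1
    exact ((hasSum_vseq k).mul_left (aseq k)).tsum_eq
  calc rho g (g \ {m}) ≤ ∑' j, ENNReal.ofReal (aseq k * vseq k j) := by
        rw [hre]; exact ENNReal.tsum_le_tsum hterm
    _ = ENNReal.ofReal (aseq k * (2 * aseq k)) := hsum
    _ = ENNReal.ofReal (1 / (2 * ((k:ℝ) + 1))) := by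
        congr 1
        have hs : aseq k * (2 * aseq k) = 2 * (1 / (4 * ((k:ℝ)+1))) := by
          rw [← aseq_sq]; ring
        rw [hs]
        have hk : ((k:ℝ)+1) ≠ 0 := by positivity
        field_simp
        ring


lemma rho_comm (x y : Set ℕ) : rho x y = rho y x := by
  unfold rho
  apply tsum_congr
  intro n
  congr 1
  ring

lemma rho_quad (x y z : Set ℕ) : rho x z ≤ 2 * rho x y + 2 * rho y z := by
  unfold rho
  rw [← ENNReal.tsum_mul_left, ← ENNReal.tsum_mul_left, ← ENNReal.tsum_add]
  apply ENNReal.tsum_le_tsum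
  intro n
  have hpt : (alphaSeq x n - alphaSeq z n)^2
      ≤ 2*(alphaSeq x n - alphaSeq y n)^2 + 2*(alphaSeq y n - alphaSeq z n)^2 := by
    nlinarith [sq_nonneg (alphaSeq x n - 2*alphaSeq y n + alphaSeq z n)]
  calc ENNReal.ofReal ((alphaSeq x n - alphaSeq z n)^2)
      ≤ ENNReal.ofReal (2*(alphaSeq x n - alphaSeq y n)^2
          + 2*(alphaSeq y n - alphaSeq z n)^2) := ENNReal.ofReal_le_ofReal hpt
    _ = 2 * ENNReal.ofReal ((alphaSeq x n - alphaSeq y n)^2)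
          + 2 * ENNReal.ofReal ((alphaSeq y n - alphaSeq z n)^2) := by
        rw [ENNReal.ofReal_add (by positivity) (by positivity),
          ENNReal.ofReal_mul (by norm_num), ENNReal.ofReal_mul (by norm_num)]
        norm_num


/-- In the metric space `(F, √ρ)` no point is isolated: every ball around
`g ∈ F` of positive radius contains a point of `F` different from `g`. -/
theorem Fset_no_isolated_points :
    ∀ g ∈ Fset, ∀ ε : ℝ, 0 < ε →
      ∃ h ∈ Fset, h ≠ g ∧ Real.sqrt (rho g h).toReal < ε := by
  intro g hg ε hε
  obtain ⟨hginf, hgrho⟩ := hg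
  have hg' : (setOf (· ∈ g)).Infinite := hginf
  obtain ⟨k, hk⟩ := exists_nat_one_div_lt (show (0:ℝ) < 2 * ε^2 by positivity)
  set m := Nat.nth (· ∈ g) k with hm
  have hmg : m ∈ g := Nat.nth_mem_of_infinite hg' k
  have hb := rho_diff_le hg' k
  have hblt : rho g (g \ {m}) < ⊤ := lt_of_le_of_lt hb ENNReal.ofReal_lt_top
  refine ⟨g \ {m}, ⟨hginf.diff (Set.finite_singleton m), ?_⟩, ?_, ?_⟩
  · calc rho (g \ {m}) Set.univ
        ≤ 2 * rho (g \ {m}) g + 2 * rho g Set.univ := rho_quad _ _ _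
      _ < ⊤ := by
          rw [rho_comm]
          exact ENNReal.add_lt_top.2 ⟨ENNReal.mul_lt_top (by norm_num) hblt,
            ENNReal.mul_lt_top (by norm_num) hgrho⟩
  · intro he
    have h2 : m ∈ g \ {m} := he.symm ▸ hmg
    exact h2.2 rfl
  · have htl : (rho g (g \ {m})).toReal ≤ 1/(2*((k:ℝ)+1)) :=
      ENNReal.toReal_le_of_le_ofReal (by positivity) hb
    have h9 : (0:ℝ) < (k:ℝ)+1 := by positivity
    have hhalf : 1/(2*((k:ℝ)+1)) = (1/((k:ℝ)+1))/2 := by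
      field_simp
    have hlt2 : (rho g (g \ {m})).toReal < ε^2 := by
      rw [hhalf] at htl
      linarith
    rw [Real.sqrt_lt' hε]
    exact hlt2

end
end

section
/- If x and y are infinite sets of natural numbers whose symmetric difference x △ y is finite, then ρ(x,y) < ∞. -/
open MeasureTheory Filter Set
open scoped ENNReal

noncomputable section

/-! ### Auxiliary material for the proof -/

/-- The counting function with the canonical classical instance, matching `alphaSeq`. -/
noncomputable def cnt (x : Set ℕ) : ℕ → ℕ := @Nat.count (· ∈ x) (Classical.decPred _)

lemma alpha_of_mem {x : Set ℕ} {n : ℕ} (h : n ∈ x) :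
    alphaSeq x n = 1/4 + 1/(2 * Real.sqrt ((cnt x n : ℝ) + 1)) := by
  unfold alphaSeq cnt
  rw [if_pos h]

lemma alpha_of_not_mem {x : Set ℕ} {n : ℕ} (h : n ∉ x) :
    alphaSeq x n = 1/4 := by
  unfold alphaSeq
  rw [if_neg h]

lemma alpha_bounds (x : Set ℕ) (n : ℕ) : 1/4 ≤ alphaSeq x n ∧ alphaSeq x n ≤ 3/4 := by
  by_cases h : n ∈ x
  · rw [alpha_of_mem h]
    have h1 : (1:ℝ) ≤ Real.sqrt ((cnt x n : ℝ) + 1) :=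
      Real.one_le_sqrt.2 (by linarith [Nat.cast_nonneg (α := ℝ) (cnt x n)])
    have h2 : 0 < Real.sqrt ((cnt x n : ℝ) + 1) := by linarith
    have h3 : 1/(2 * Real.sqrt ((cnt x n : ℝ) + 1)) ≤ 1/2 :=
      one_div_le_one_div_of_le (by norm_num) (by linarith)
    have h4 : 0 < 1/(2 * Real.sqrt ((cnt x n : ℝ) + 1)) := by positivity
    constructor <;> linarith
  · rw [alpha_of_not_mem h]; norm_num

lemma sqrt_key (u v : ℝ) (hu : 1 ≤ u) (huv : u ≤ v) :
    (1/(2*Real.sqrt u) - 1/(2*Real.sqrt v))^2 ≤ (v - u)^2 / u^3 := by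
  have hu0 : (0:ℝ) < u := by linarith
  have hv0 : (0:ℝ) < v := by linarith
  set su := Real.sqrt u with hsu'
  set sv := Real.sqrt v with hsv'
  have hsu : 1 ≤ su := Real.one_le_sqrt.2 hu
  have hsv : su ≤ sv := Real.sqrt_le_sqrt huv
  have h1 : su^2 = u := Real.sq_sqrt hu0.le
  have h2 : sv^2 = v := Real.sq_sqrt hv0.le
  have hsu0 : (0:ℝ) < su := by linarith
  have hsv0 : (0:ℝ) < sv := by linarith
  have e : 1/(2*su) - 1/(2*sv) = (sv - su)/(2*su*sv) := by
    field_simp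
  rw [e, div_pow, div_le_div_iff₀ (by positivity) (by positivity)]
  have hfac : v - u = (sv - su)*(sv + su) := by nlinarith
  rw [hfac]
  have hA : u ≤ (sv+su)^2 := by nlinarith
  have hB : u*u ≤ v*u := by nlinarith
  have key2 : u^3 ≤ (sv + su)^2 * (2*su*sv)^2 := by
    calc u^3 = u*(u*u) := by ring
      _ ≤ (sv+su)^2*(v*u) := mul_le_mul hA hB (by positivity) (by positivity)
      _ ≤ (sv+su)^2*(2*su*sv)^2 := by
          rw [show (2*su*sv)^2 = 4*(su^2*sv^2) by ring, h1, h2]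
          nlinarith [sq_nonneg (sv+su)]
  calc (sv - su)^2 * u^3 ≤ (sv - su)^2 * ((sv + su)^2 * (2*su*sv)^2) := by
        apply mul_le_mul_of_nonneg_left key2 (sq_nonneg _)
    _ = ((sv - su)*(sv+su))^2 * (2*su*sv)^2 := by ring

lemma sqrt_key' (u v m : ℝ) (hu : 1 ≤ u) (hv : 1 ≤ v) (hm1 : 0 < m) (hmu : m ≤ u)
    (hmv : m ≤ v) :
    (1/(2*Real.sqrt u) - 1/(2*Real.sqrt v))^2 ≤ (v - u)^2 / m^3 := by
  rcases le_total u v with hle | hle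
  · calc (1/(2*Real.sqrt u) - 1/(2*Real.sqrt v))^2 ≤ (v - u)^2 / u^3 :=
          sqrt_key u v hu hle
      _ ≤ (v - u)^2 / m^3 := by
          apply div_le_div_of_nonneg_left (sq_nonneg _) (by positivity)
          exact pow_le_pow_left₀ hm1.le hmu 3
  · calc (1/(2*Real.sqrt u) - 1/(2*Real.sqrt v))^2
        = (1/(2*Real.sqrt v) - 1/(2*Real.sqrt u))^2 := by ring
      _ ≤ (u - v)^2 / v^3 := sqrt_key v u hv hle
      _ ≤ (v - u)^2 / m^3 := by
          rw [show (u-v)^2 = (v-u)^2 by ring]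
          apply div_le_div_of_nonneg_left (sq_nonneg _) (by positivity)
          exact pow_le_pow_left₀ hm1.le hmv 3

lemma cnt_shift {x y : Set ℕ} (N : ℕ) (hN : ∀ n, N ≤ n → (n ∈ x ↔ n ∈ y)) :
    ∀ n, N ≤ n → cnt x n + cnt y N = cnt y n + cnt x N := by
  intro n hn
  induction n, hn using Nat.le_induction with
  | base => omega
  | succ n hn ih =>
    unfold cnt at ih ⊢
    rw [Nat.count_succ, Nat.count_succ]
    have hiff := hN n hn
    by_cases hnx : n ∈ x
    · simp only [hnx, hiff.1 hnx, if_true]; omega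
    · have hny : n ∉ y := fun hh => hnx (hiff.2 hh)
      simp only [hnx, hny, if_false]; omega

lemma cnt_injOn (x : Set ℕ) : ∀ m ∈ x, ∀ n ∈ x, cnt x m = cnt x n → m = n := by
  intro m hm n hn hmn
  exact @Nat.count_injective (· ∈ x) (Classical.decPred _) _ _ hm hn hmn

/-- The dominating tail sequence. -/
noncomputable def Fb (C : ℕ) (k : ℕ) : ℝ≥0∞ :=
  ENNReal.ofReal ((C:ℝ)^2 / ((max (k + 1 - C) 1 : ℕ):ℝ)^3)

lemma tsum_ofReal_lt_top {f : ℕ → ℝ} (hnn : ∀ n, 0 ≤ f n) (hs : Summable f) :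
    ∑' n, ENNReal.ofReal (f n) < ⊤ := by
  rw [← ENNReal.ofReal_tsum_of_nonneg hnn hs]
  exact ENNReal.ofReal_lt_top

lemma tsum_Fb_lt_top (C : ℕ) : ∑' k, Fb C k < ⊤ := by
  simp only [Fb]
  apply tsum_ofReal_lt_top (fun k => by positivity)
  rw [← summable_nat_add_iff C]
  have h3 : Summable (fun n : ℕ => 1/((n:ℝ))^3) :=
    Real.summable_one_div_nat_pow.2 (by norm_num)
  have h4 := (summable_nat_add_iff 1).2 h3
  have hs : Summable (fun j : ℕ => (C:ℝ)^2 * (1/((j:ℝ)+1)^3)) := by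
    apply Summable.mul_left
    refine h4.congr fun n => ?_
    push_cast
    ring
  refine hs.congr fun j => ?_
  have h1 : (j + C + 1 - C) = j + 1 := by omega
  have h2 : max (j + 1) 1 = j + 1 := by omega
  rw [h1, h2]
  push_cast
  ring

/-- If `x, y ∈ [ω]^ω` have finite symmetric difference then `ρ(x,y) < ∞`. -/
theorem rho_lt_top_of_symmDiff_finite (x y : Set ℕ)
    (hx : x.Infinite) (hy : y.Infinite)
    (h : (symmDiff x y).Finite) :
    rho x y < ⊤ := by
  classical
  obtain ⟨N, hN⟩ : ∃ N : ℕ, ∀ n, N ≤ n → (n ∈ x ↔ n ∈ y) := by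
    obtain ⟨M, hM⟩ := h.bddAbove
    refine ⟨M + 1, fun n hn => ?_⟩
    constructor <;> intro hmem <;> by_contra hc
    · have hs : n ∈ symmDiff x y := Set.mem_symmDiff.2 (Or.inl ⟨hmem, hc⟩)
      have := hM hs; omega
    · have hs : n ∈ symmDiff x y := Set.mem_symmDiff.2 (Or.inr ⟨hmem, hc⟩)
      have := hM hs; omega
  set C : ℕ := cnt x N + cnt y N with hC
  have hshift := cnt_shift N hN
  -- pointwise bound
  have hbound : ∀ n, ENNReal.ofReal ((alphaSeq x n - alphaSeq y n)^2)
      ≤ (if n < N then 1 else 0) + Set.indicator x (fun m => Fb C (cnt x m)) n := by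
    intro n
    by_cases hn : n < N
    · rw [if_pos hn]
      refine le_trans ?_ le_self_add
      rw [show (1 : ℝ≥0∞) = ENNReal.ofReal 1 by simp]
      apply ENNReal.ofReal_le_ofReal
      obtain ⟨h1, h2⟩ := alpha_bounds x n
      obtain ⟨h3, h4⟩ := alpha_bounds y n
      nlinarith
    · push_neg at hn
      by_cases hnx : n ∈ x
      · have hny : n ∈ y := (hN n hn).1 hnx
        rw [if_neg (not_lt.2 hn), Set.indicator_of_mem hnx, zero_add]
        rw [alpha_of_mem hnx, alpha_of_mem hny, Fb]
        set a := cnt x n with ha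
        set b := cnt y n with hb
        have hab : a + cnt y N = b + cnt x N := hshift n hn
        set m : ℕ := max (a + 1 - C) 1 with hm
        have hdiff : (1/4 + 1/(2 * Real.sqrt ((a : ℝ) + 1))
            - (1/4 + 1/(2 * Real.sqrt ((b : ℝ) + 1))))^2
            = (1/(2 * Real.sqrt ((a : ℝ) + 1)) - 1/(2 * Real.sqrt ((b : ℝ) + 1)))^2 := by
          ring
        rw [hdiff]
        apply ENNReal.ofReal_le_ofReal
        have hmu : (m:ℕ) ≤ a + 1 := by omega
        have hmv : (m:ℕ) ≤ b + 1 := by omega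
        have hmuR : (m:ℝ) ≤ (a:ℝ) + 1 := by exact_mod_cast (by exact_mod_cast hmu : (m:ℕ) ≤ a + 1)
        have hmvR : (m:ℝ) ≤ (b:ℝ) + 1 := by
          have := (Nat.cast_le (α := ℝ)).2 hmv; push_cast at this; linarith
        have hmuR' : (m:ℝ) ≤ (a:ℝ) + 1 := by
          have := (Nat.cast_le (α := ℝ)).2 hmu; push_cast at this; linarith
        have hm0 : (0:ℝ) < (m:ℝ) := by
          have : 1 ≤ m := by omega
          exact_mod_cast Nat.lt_of_lt_of_le Nat.zero_lt_one this
        calc (1/(2 * Real.sqrt ((a : ℝ) + 1)) - 1/(2 * Real.sqrt ((b : ℝ) + 1)))^2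
            ≤ (((b:ℝ) + 1) - ((a:ℝ) + 1))^2 / (m:ℝ)^3 :=
              sqrt_key' _ _ _ (by linarith [Nat.cast_nonneg (α := ℝ) a])
                (by linarith [Nat.cast_nonneg (α := ℝ) b]) hm0 hmuR' hmvR
          _ ≤ (C:ℝ)^2 / (m:ℝ)^3 := by
              apply div_le_div_of_nonneg_right ?_ (by positivity)
              have h1 : (b:ℝ) ≤ (a:ℝ) + C := by
                have : b ≤ a + C := by omega
                exact_mod_cast this
              have h2 : (a:ℝ) ≤ (b:ℝ) + C := by
                have : a ≤ b + C := by omega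
                exact_mod_cast this
              nlinarith [Nat.cast_nonneg (α := ℝ) C]
      · have hny : n ∉ y := fun hh => hnx ((hN n hn).2 hh)
        rw [alpha_of_not_mem hnx, alpha_of_not_mem hny]
        simp
  -- assembling
  have step1 : rho x y ≤ ∑' n, ((if n < N then 1 else 0)
      + Set.indicator x (fun m => Fb C (cnt x m)) n) := ENNReal.tsum_le_tsum hbound
  rw [ENNReal.tsum_add] at step1
  have hsum1 : ∑' n, (if n < N then (1:ℝ≥0∞) else 0) < ⊤ := by
    rw [tsum_eq_sum (s := Finset.range N) (fun b hb => if_neg (by simpa using hb))]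
    refine ENNReal.sum_lt_top.2 fun a _ => ?_
    split <;> simp
  have hsum2 : ∑' n, Set.indicator x (fun m => Fb C (cnt x m)) n ≤ ∑' k, Fb C k := by
    rw [← tsum_subtype]
    have hinj : Function.Injective (fun n : ↥x => cnt x (n : ℕ)) := by
      intro a b hab
      exact Subtype.ext (cnt_injOn x a a.2 b b.2 hab)
    exact ENNReal.tsum_comp_le_tsum_of_injective hinj (Fb C)
  have hsum3 : ∑' k, Fb C k < ⊤ := tsum_Fb_lt_top C
  exact lt_of_le_of_lt step1 (ENNReal.add_lt_top.2 ⟨hsum1, lt_of_le_of_lt hsum2 hsum3⟩)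

end
end
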